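/- For n ≥ 4, consider the nested triple of Lie algebras so(n−1) ⊆ so(n) ⊆ so(n+1) given by the block-diagonal embeddings x ↦ diag(x,0). With 𝔪 = so(n−1)^⊥ ∩ so(n) and 𝔭 = so(n)^⊥ in so(n+1) (orthogonal complements with respect to the trace form), the fatness coindex of this triple is strictly greater than 1; in fact taking y ∈ 𝔪 corresponding to the vector e₁ ∈ ℝ^{n−1}, one has dim Z_𝔭(y) = n − 2. -/

import Mathlib

/-- The centralizer of `x` in a subspace `a` of a Lie algebra:
`Z_a(x) = {y ∈ a : ⁅x, y⁆ = 0}`. -/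
def centralizerIn {L : Type*} [LieRing L] [LieAlgebra ℝ L]
    (a : Submodule ℝ L) (x : L) : Submodule ℝ L where
  carrier := {y | y ∈ a ∧ ⁅x, y⁆ = 0}
  add_mem' := by
    rintro y z ⟨hy, hy'⟩ ⟨hz, hz'⟩
    exact ⟨a.add_mem hy hz, by rw [lie_add, hy', hz', add_zero]⟩
  zero_mem' := ⟨a.zero_mem, lie_zero x⟩
  smul_mem' := by
    rintro c y ⟨hy, hy'⟩
    exact ⟨a.smul_mem c hy, by rw [lie_smul, hy', smul_zero]⟩

/-- For `z ∈ ℝᵏ`, the skew-symmetric matrix `M(z) ∈ so(k+1)` whose last column is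
`(z₁, …, z_k, 0)ᵀ`, whose last row is `(−z₁, …, −z_k, 0)`, and with zeros elsewhere. -/
def Mvec {k : ℕ} (z : Fin k → ℝ) : Matrix (Fin (k + 1)) (Fin (k + 1)) ℝ :=
  Matrix.of fun i j =>
    if hi : (i : ℕ) < k then
      if hj : (j : ℕ) < k then 0 else z ⟨i, hi⟩
    else
      if hj : (j : ℕ) < k then -z ⟨j, hj⟩ else 0

/-- `Mvec` as a linear map. -/
def MvecL (k : ℕ) : (Fin k → ℝ) →ₗ[ℝ] Matrix (Fin (k + 1)) (Fin (k + 1)) ℝ where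
  toFun := Mvec
  map_add' z w := by
    funext i j
    simp only [Mvec, Matrix.of_apply, Matrix.add_apply, Pi.add_apply]
    split_ifs <;> simp <;> ring
  map_smul' c z := by
    funext i j
    simp only [Mvec, Matrix.of_apply, Matrix.smul_apply, Pi.smul_apply, RingHom.id_apply,
      smul_eq_mul]
    split_ifs <;> simp [mul_comm]

/-- The block-diagonal embedding `A ↦ diag(A, 0)` of `k × k` matrices into
`(k+1) × (k+1)` matrices. -/
def embedM {k : ℕ} (A : Matrix (Fin k) (Fin k) ℝ) : Matrix (Fin (k + 1)) (Fin (k + 1)) ℝ :=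
  Matrix.of fun i j =>
    if hi : (i : ℕ) < k then
      if hj : (j : ℕ) < k then A ⟨i, hi⟩ ⟨j, hj⟩ else 0
    else 0

/-- `embedM` as a linear map. -/
def embedL (k : ℕ) : Matrix (Fin k) (Fin k) ℝ →ₗ[ℝ] Matrix (Fin (k + 1)) (Fin (k + 1)) ℝ where
  toFun := embedM
  map_add' A C := by
    funext i j
    simp only [embedM, Matrix.of_apply, Matrix.add_apply]
    split_ifs <;> simp
  map_smul' c A := by
    funext i j
    simp only [embedM, Matrix.of_apply, Matrix.smul_apply, RingHom.id_apply, smul_eq_mul]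
    split_ifs <;> simp

attribute [local instance 100] LieRing.ofAssociativeRing

lemma mulE_apply {N : ℕ} (a b i j : Fin N) (X : Matrix (Fin N) (Fin N) ℝ) :
    (Matrix.single a b (1:ℝ) * X) i j = if i = a then X b j else 0 := by
  by_cases h : i = a
  · subst h; simp
  · simp [h, Matrix.single_mul_apply_of_ne (c := (1:ℝ)) a b i j h X]

lemma Emul_apply {N : ℕ} (a b i j : Fin N) (X : Matrix (Fin N) (Fin N) ℝ) :
    (X * Matrix.single a b (1:ℝ)) i j = if j = b then X i a else 0 := by
  by_cases h : j = b
  · subst h; simp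
  · simp [h, Matrix.mul_single_apply_of_ne (c := (1:ℝ)) a b i j h X]

set_option maxHeartbeats 1600000 in
/-- For `n = m + 1 ≥ 4`, consider the nested triple
`so(n−1) ⊆ so(n) ⊆ so(n+1)` given by the block-diagonal embeddings `x ↦ diag(x, 0)`.
With `𝔪 = so(n−1)ᗮ ⊓ so(n) = {diag(M'(w), 0) : w ∈ ℝ^{n−1}}` and
`𝔭 = so(n)ᗮ = {M(z) : z ∈ ℝⁿ}` (orthogonal complements for the trace form), the
fatness coindex of this triple is strictly greater than `1`: for the element
`y ∈ 𝔪` corresponding to `e₁ ∈ ℝ^{n−1}`, one has `dim Z_𝔭(y) = n − 2 > 1`. -/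
theorem stmt3 (m : ℕ) (hm : 3 ≤ m)
    (p : Submodule ℝ (Matrix (Fin (m + 2)) (Fin (m + 2)) ℝ))
    (hp : p = LinearMap.range (MvecL (m + 1)))
    (mm : Submodule ℝ (Matrix (Fin (m + 2)) (Fin (m + 2)) ℝ))
    (hmm : mm = Submodule.map (embedL (m + 1)) (LinearMap.range (MvecL m)))
    (e₁ : Fin m → ℝ) (he₁ : e₁ = fun i => if i = ⟨0, by omega⟩ then 1 else 0)
    (y : Matrix (Fin (m + 2)) (Fin (m + 2)) ℝ) (hy : y = embedM (Mvec e₁)) :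
    y ∈ mm ∧ y ≠ 0 ∧
      Module.finrank ℝ (centralizerIn p y) = m - 1 ∧
      1 < Module.finrank ℝ (centralizerIn p y) := by

  subst hp hmm he₁
  have hm2 : m < m + 2 := by omega
  have h02 : 0 < m + 2 := by omega
  -- y as difference of standard basis matrices
  have hystd : y = Matrix.single (⟨0, h02⟩ : Fin (m+2)) ⟨m, hm2⟩ (1:ℝ)
      - Matrix.single (⟨m, hm2⟩ : Fin (m+2)) ⟨0, h02⟩ 1 := by
    rw [hy]
    funext i j
    rcases i with ⟨iv, hi⟩
    rcases j with ⟨jv, hj⟩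
    simp only [embedM, Mvec, Matrix.of_apply, Matrix.sub_apply, Matrix.single,
      Fin.mk.injEq]
    split_ifs <;> first | (exfalso; omega) | norm_num
  -- the bracket formula
  have hbr : ∀ z : Fin (m + 1) → ℝ,
      ⁅y, Mvec z⁆
        = Mvec (fun i => if (i : ℕ) = 0 then z ⟨m, by omega⟩
            else if (i : ℕ) = m then -z ⟨0, by omega⟩ else 0) := by
    intro z
    clear hy
    rw [hystd, Ring.lie_def, sub_mul, mul_sub]
    clear hystd
    funext i j
    rcases i with ⟨iv, hi⟩
    rcases j with ⟨jv, hj⟩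
    simp only [Matrix.sub_apply, mulE_apply, Emul_apply, Mvec, Matrix.of_apply,
      Fin.mk.injEq, Fin.val_mk]
    split_ifs <;>
      first | rfl | (exfalso; omega) | norm_num | omega | (push_neg; ring)
  -- injectivity of MvecL
  have hco : ∀ w : Fin (m + 1) → ℝ, MvecL (m + 1) w = Mvec w := fun _ => rfl
  have hinj : Function.Injective (MvecL (m + 1)) := by
    intro z w h
    funext i
    have := congrFun (congrFun h i.castSucc) (Fin.last (m + 1))
    rw [hco, hco] at this
    simpa [MvecL, Mvec, Fin.is_lt, i.is_lt, Nat.lt_succ_iff.mp i.is_lt] using this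
  -- the subspace of vectors vanishing at 0 and m
  set π : (Fin (m + 1) → ℝ) →ₗ[ℝ] ℝ × ℝ :=
    (LinearMap.proj (⟨0, by omega⟩ : Fin (m + 1))).prod
      (LinearMap.proj (⟨m, by omega⟩ : Fin (m + 1))) with hπ
  have hπ_apply : ∀ z, π z = (z ⟨0, by omega⟩, z ⟨m, by omega⟩) := fun z => rfl
  have hπsurj : Function.Surjective π := by
    rintro ⟨s, t⟩
    refine ⟨Pi.single (⟨0, by omega⟩ : Fin (m + 1)) s
      + Pi.single (⟨m, by omega⟩ : Fin (m + 1)) t, ?_⟩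
    rw [hπ_apply]
    simp only [Pi.add_apply, Pi.single_apply]
    simp [Fin.ext_iff, show ¬(0 = m) by omega, show ¬(m = 0) by omega]
  -- centralizer = image of ker π
  have hcent : centralizerIn (LinearMap.range (MvecL (m + 1))) y
      = Submodule.map (MvecL (m + 1)) (LinearMap.ker π) := by
    apply le_antisymm
    · rintro x ⟨⟨z, rfl⟩, hx0⟩
      refine ⟨z, ?_, rfl⟩
      show z ∈ LinearMap.ker π
      rw [LinearMap.mem_ker, hπ_apply]
      have hz : MvecL (m + 1) (fun i => if (i : ℕ) = 0 then z ⟨m, by omega⟩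
          else if (i : ℕ) = m then -z ⟨0, by omega⟩ else 0) = MvecL (m + 1) 0 := by
        rw [map_zero, hco, ← hbr z, ← hco z]
        exact hx0
      have hz' := congrFun (hinj hz)
      have h1 := hz' ⟨0, by omega⟩
      have h2 := hz' ⟨m, by omega⟩
      norm_num at h1 h2
      rw [if_neg (show ¬(m = 0) by omega), neg_eq_zero] at h2
      exact Prod.ext (by simpa using h2) (by simpa using h1)
    · rintro x ⟨z, hz, rfl⟩
      have hz' : z ⟨0, by omega⟩ = 0 ∧ z ⟨m, by omega⟩ = 0 := by
        have := hz
        rw [SetLike.mem_coe, LinearMap.mem_ker, hπ_apply, Prod.mk_eq_zero] at this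
        exact this
      refine ⟨⟨z, rfl⟩, ?_⟩
      rw [hco, hbr z]
      have hw : (fun i : Fin (m + 1) => if (i : ℕ) = 0 then z ⟨m, by omega⟩
          else if (i : ℕ) = m then -z ⟨0, by omega⟩ else 0) = 0 := by
        funext i
        rcases hz' with ⟨hz1, hz2⟩
        simp only [Pi.zero_apply]
        split_ifs with hc1 hc2
        · exact hz2
        · rw [hz1]; ring
        · rfl
      rw [hw, ← hco 0, map_zero]
  -- dimension count
  have hker : Module.finrank ℝ (LinearMap.ker π) = m - 1 := by
    have hr := LinearMap.finrank_range_add_finrank_ker π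
    rw [LinearMap.range_eq_top.mpr hπsurj] at hr
    simp only [finrank_top] at hr
    have h1 : Module.finrank ℝ (ℝ × ℝ) = 2 := by simp
    have h2 : Module.finrank ℝ (Fin (m + 1) → ℝ) = m + 1 := by simp
    omega
  have hdim : Module.finrank ℝ (centralizerIn (LinearMap.range (MvecL (m + 1))) y) = m - 1 := by
    rw [hcent, ← hker]
    exact (LinearEquiv.finrank_eq (Submodule.equivMapOfInjective _ hinj _)).symm
  refine ⟨?_, ?_, hdim, ?_⟩
  · refine ⟨Mvec (fun i => if i = ⟨0, by omega⟩ then 1 else 0),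
      ⟨(fun i => if i = ⟨0, by omega⟩ then 1 else 0), rfl⟩, hy.symm⟩
  · intro h
    rw [h] at hystd
    have h4 := congrFun (congrFun hystd ⟨0, h02⟩) ⟨m, hm2⟩
    have hne : (⟨0, h02⟩ : Fin (m + 2)) ≠ ⟨m, hm2⟩ := by simp [Fin.ext_iff]; omega
    simp only [Matrix.zero_apply, Matrix.sub_apply, Matrix.single,
      Matrix.of_apply, Fin.mk.injEq] at h4
    simp [show ¬(m = 0) by omega] at h4
  · rw [hdim]; omega
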